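/- Fix n ≥ 1. For d > n, let D_d = {e₁,…,e_d} ⊆ ℝ^d be the standard basis vectors. Then L_{D_d}^⋆ = (d−1)/d, and the minimum over all choices of n points from D_d of L_{D_d}(average of the n points) equals L_{D_d}^⋆ + 1/n − 1/d. Consequently, lim_{d→∞} L_{D_d}^⋆(n)/L_{D_d}^⋆ = (n+1)/n. -/

import Mathlib

open Filter

private lemma euclid_norm_sq {d : ℕ} (x : EuclideanSpace ℝ (Fin d)) :
    ‖x‖ ^ 2 = ∑ j, (x j) ^ 2 := by
  rw [EuclideanSpace.norm_eq, Real.sq_sqrt (by positivity)]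
  simp [Real.norm_eq_abs, sq_abs]

private lemma key_lemma {d : ℕ} (hd : 0 < d) (h : EuclideanSpace ℝ (Fin d)) :
    (1 / (d : ℝ)) * ∑ i, ‖h - EuclideanSpace.single i (1:ℝ)‖ ^ 2
      = (∑ j, (h j - 1 / d) ^ 2) + ((d : ℝ) - 1) / d := by
  have hd' : (d:ℝ) ≠ 0 := Nat.cast_ne_zero.2 hd.ne'
  have h1 : ∀ i : Fin d, ‖h - EuclideanSpace.single i (1:ℝ)‖ ^ 2
      = ∑ j, (h j - if j = i then (1:ℝ) else 0) ^ 2 := by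
    intro i
    rw [euclid_norm_sq]
    congr 1; ext j
    simp [EuclideanSpace.single_apply]
  rw [Finset.sum_congr rfl (fun i _ => h1 i), Finset.sum_comm]
  have h2 : ∀ j : Fin d, ∑ i : Fin d, (h j - if j = i then (1:ℝ) else 0) ^ 2
      = d * (h j)^2 - 2 * h j + 1 := by
    intro j
    have e : ∀ i : Fin d, (h j - if j = i then (1:ℝ) else 0) ^ 2
        = (h j)^2 + (if j = i then 1 - 2 * h j else 0) := by
      intro i; split <;> ring
    simp only [e, Finset.sum_add_distrib, Finset.sum_const, Finset.card_univ,
      Fintype.card_fin, Finset.sum_ite_eq, Finset.mem_univ, if_true]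
    ring
  rw [Finset.sum_congr rfl (fun j _ => h2 j)]
  have e1 : ∑ j : Fin d, ((d:ℝ) * (h j)^2 - 2 * h j + 1)
      = d * (∑ j, (h j)^2) - 2 * (∑ j, h j) + d := by
    rw [Finset.sum_add_distrib, Finset.sum_sub_distrib, ← Finset.mul_sum, ← Finset.mul_sum]
    simp
  have e2 : ∑ j : Fin d, (h j - 1/(d:ℝ))^2
      = (∑ j, (h j)^2) - 2/d * (∑ j, h j) + d * (1/(d:ℝ)^2) := by
    have e : ∀ j : Fin d, (h j - 1/(d:ℝ))^2 = (h j)^2 - 2/d * h j + 1/d^2 := by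
      intro j; field_simp; ring
    simp only [e, Finset.sum_add_distrib, Finset.sum_sub_distrib, ← Finset.mul_sum,
      Finset.sum_const, Finset.card_univ, Fintype.card_fin, nsmul_eq_mul]
  rw [e1, e2]
  field_simp
  ring

private lemma coord_lemma {n d : ℕ} (z : Fin n → Fin d) (j : Fin d) :
    ((n : ℝ)⁻¹ • ∑ i, EuclideanSpace.single (z i) (1:ℝ)) j
      = (n:ℝ)⁻¹ * ((Finset.univ.filter (fun i => z i = j)).card : ℝ) := by
  have h : (∑ i, EuclideanSpace.single (z i) (1:ℝ)) j
      = ∑ i, (EuclideanSpace.single (z i) (1:ℝ)) j := by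
    rw [WithLp.ofLp_sum]
    exact Finset.sum_apply j Finset.univ fun i => (EuclideanSpace.single (z i) (1:ℝ)).ofLp
  have h2 : (∑ i, EuclideanSpace.single (z i) (1:ℝ)) j
      = ((Finset.univ.filter (fun i => z i = j)).card : ℝ) := by
    rw [h]; simp [EuclideanSpace.single_apply, Finset.sum_boole, eq_comm]
  simp [PiLp.smul_apply, h2, smul_eq_mul]

private lemma fiber_sum {n d : ℕ} (z : Fin n → Fin d) :
    ∑ j : Fin d, (Finset.univ.filter (fun i => z i = j)).card = n := by
  rw [← Finset.card_eq_sum_card_fiberwise (fun x _ => Finset.mem_univ (z x))]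
  simp

private lemma select_val {n d : ℕ} (hn : 0 < n) (hd : 0 < d) (z : Fin n → Fin d) :
    (1 / (d : ℝ)) * ∑ i, ‖((n : ℝ)⁻¹ • ∑ i, EuclideanSpace.single (z i) (1:ℝ))
        - EuclideanSpace.single i (1:ℝ)‖ ^ 2
      = ((n:ℝ)⁻¹)^2 * (∑ j, (((Finset.univ.filter (fun i => z i = j)).card : ℝ))^2)
          - 1/d + ((d:ℝ)-1)/d := by
  have hn' : (n:ℝ) ≠ 0 := Nat.cast_ne_zero.2 hn.ne'
  have hd' : (d:ℝ) ≠ 0 := Nat.cast_ne_zero.2 hd.ne'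
  have hc1 : ∑ j : Fin d, ((Finset.univ.filter (fun i => z i = j)).card : ℝ) = n := by
    exact_mod_cast congrArg (Nat.cast : ℕ → ℝ) (fiber_sum z)
  rw [key_lemma hd]
  rw [Finset.sum_congr rfl (fun j _ => by rw [coord_lemma z j])]
  have e : ∀ j : Fin d, ((n:ℝ)⁻¹ * ((Finset.univ.filter (fun i => z i = j)).card : ℝ) - 1/d)^2
      = ((n:ℝ)⁻¹)^2 * (((Finset.univ.filter (fun i => z i = j)).card : ℝ))^2
        + (-2/(n*d)) * ((Finset.univ.filter (fun i => z i = j)).card : ℝ) + 1/d^2 := by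
    intro j; field_simp; ring
  rw [Finset.sum_congr rfl (fun j _ => e j)]
  rw [Finset.sum_add_distrib, Finset.sum_add_distrib, ← Finset.mul_sum, ← Finset.mul_sum, hc1]
  simp only [Finset.sum_const, Finset.card_univ, Fintype.card_fin, nsmul_eq_mul]
  field_simp
  ring

theorem basis_vectors_mean_estimation
    (n : ℕ) (hn : 1 ≤ n) :
    (∀ d : ℕ, n < d →
      ∀ L : EuclideanSpace ℝ (Fin d) → ℝ,
        (∀ h, L h = (1 / (d : ℝ)) * ∑ i, ‖h - EuclideanSpace.single i (1:ℝ)‖^2) →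
        ((∀ h, ((d : ℝ) - 1) / d ≤ L h) ∧
         (∃ h, L h = ((d : ℝ) - 1) / d) ∧
         (∀ z : Fin n → Fin d,
            ((d : ℝ) - 1) / d + 1 / n - 1 / d ≤
              L ((n : ℝ)⁻¹ • ∑ i, EuclideanSpace.single (z i) (1:ℝ))) ∧
         (∃ z : Fin n → Fin d,
            L ((n : ℝ)⁻¹ • ∑ i, EuclideanSpace.single (z i) (1:ℝ)) =
              ((d : ℝ) - 1) / d + 1 / n - 1 / d))) ∧
    Tendsto (fun d : ℕ => ((((d : ℝ) - 1) / d + 1 / n - 1 / d) / (((d : ℝ) - 1) / d)))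
      atTop (nhds (((n : ℝ) + 1) / n)) := by
  have hn0 : 0 < n := hn
  have hn' : (n:ℝ) ≠ 0 := Nat.cast_ne_zero.2 hn0.ne'
  constructor
  · intro d hnd L hL
    have hd : 0 < d := lt_of_le_of_lt (Nat.zero_le n) hnd
    have hd' : (d:ℝ) ≠ 0 := Nat.cast_ne_zero.2 hd.ne'
    refine ⟨?_, ?_, ?_, ?_⟩
    · -- lower bound
      intro h
      rw [hL h, key_lemma hd h]
      have : (0:ℝ) ≤ ∑ j, (h j - 1 / d) ^ 2 :=
        Finset.sum_nonneg fun j _ => sq_nonneg _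
      linarith
    · -- minimizer
      refine ⟨(WithLp.toLp 2 (fun _ => 1/(d:ℝ)) : EuclideanSpace ℝ (Fin d)), ?_⟩
      rw [hL, key_lemma hd]
      simp
    · -- lower bound for selections
      intro z
      rw [hL, select_val hn0 hd z]
      have hge : (n:ℝ) ≤ ∑ j, (((Finset.univ.filter (fun i => z i = j)).card : ℝ))^2 := by
        have : n ≤ ∑ j : Fin d, (Finset.univ.filter (fun i => z i = j)).card ^ 2 := by
          calc n = ∑ j : Fin d, (Finset.univ.filter (fun i => z i = j)).card :=
                (fiber_sum z).symm
            _ ≤ _ := Finset.sum_le_sum fun j _ => Nat.le_self_pow two_ne_zero _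
        exact_mod_cast this
      have h2 : 1/(n:ℝ) ≤ ((n:ℝ)⁻¹)^2 * ∑ j, (((Finset.univ.filter (fun i => z i = j)).card : ℝ))^2 := by
        have := mul_le_mul_of_nonneg_left hge (by positivity : (0:ℝ) ≤ ((n:ℝ)⁻¹)^2)
        calc 1/(n:ℝ) = ((n:ℝ)⁻¹)^2 * n := by field_simp
          _ ≤ _ := this
      linarith
    · -- equality for an injective selection
      refine ⟨fun i => Fin.castLE hnd.le i, ?_⟩
      set z : Fin n → Fin d := fun i => Fin.castLE hnd.le i with hz
      have hinj : Function.Injective z := fun a b hab => by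
        simpa [hz] using Fin.castLE_injective hnd.le hab
      have hcard : ∀ j : Fin d, (Finset.univ.filter (fun i => z i = j)).card ≤ 1 := by
        intro j
        refine Finset.card_le_one.2 fun a ha b hb => ?_
        simp only [Finset.mem_filter] at ha hb
        exact hinj (ha.2.trans hb.2.symm)
      have hsq : ∑ j : Fin d, ((Finset.univ.filter (fun i => z i = j)).card : ℝ)^2
          = (n : ℝ) := by
        have : ∀ j : Fin d, (Finset.univ.filter (fun i => z i = j)).card ^ 2
            = (Finset.univ.filter (fun i => z i = j)).card := by
          intro j
          rcases Nat.le_one_iff_eq_zero_or_eq_one.1 (hcard j) with h | h <;> simp [h]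
        have := Finset.sum_congr rfl (fun j (_ : j ∈ Finset.univ) => this j)
        have h2 : ∑ j : Fin d, (Finset.univ.filter (fun i => z i = j)).card ^ 2 = n := by
          rw [this]; exact fiber_sum z
        exact_mod_cast congrArg (Nat.cast : ℕ → ℝ) h2
      rw [hL, select_val hn0 hd z, hsq]
      field_simp
      ring
  · -- the limit
    have h1 : Tendsto (fun d : ℕ => 1/(d:ℝ)) atTop (nhds 0) :=
      tendsto_one_div_atTop_nhds_zero_nat
    have hnum : Tendsto (fun d : ℕ => (1 - 1/(d:ℝ)) + 1/n - 1/d) atTop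
        (nhds (1 + 1/n)) := by
      have c1 : Tendsto (fun _ : ℕ => (1:ℝ)) atTop (nhds 1) := tendsto_const_nhds
      have cn : Tendsto (fun _ : ℕ => (1:ℝ)/n) atTop (nhds (1/n)) := tendsto_const_nhds
      have := ((c1.sub h1).add cn).sub h1
      simpa using this
    have hden : Tendsto (fun d : ℕ => 1 - 1/(d:ℝ)) atTop (nhds 1) := by
      have c1 : Tendsto (fun _ : ℕ => (1:ℝ)) atTop (nhds 1) := tendsto_const_nhds
      have := c1.sub h1
      simpa using this
    have hmain : Tendsto (fun d : ℕ => ((1 - 1/(d:ℝ)) + 1/n - 1/d) / (1 - 1/(d:ℝ)))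
        atTop (nhds ((1 + 1/n) / 1)) := hnum.div hden one_ne_zero
    have hval : ((1:ℝ) + 1/n) / 1 = ((n:ℝ) + 1) / n := by field_simp
    rw [← hval]
    refine Tendsto.congr' ?_ hmain
    filter_upwards [eventually_ge_atTop 1] with d hd
    have hd' : (d:ℝ) ≠ 0 := Nat.cast_ne_zero.2 (by omega)
    have : ((d:ℝ) - 1) / d = 1 - 1/d := by field_simp
    rw [this]
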